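/- Let E be an invertible r×r complex matrix, H = E⁻¹Eᵀ, p ≥ 1, and a ∈ ℂʳ with Hᵖa = a and aᵀEHᵏa = [k ≡ 0 (mod p)] + [k ≡ 1 (mod p)] for all k ∈ ℤ. Define L = 1 − Σ_{k=1}^{p} Hᵏ a aᵀ E H⁻ᵏ and R = 1 − Σ_{k=1}^{p} Hᵏ a aᵀ E H^{1−k}. Then L·R = 1 and R·L = 1; in particular L is invertible. -/

import Mathlib

open Matrix

private lemma tele_conj_pow {r : ℕ} (E X : Matrix (Fin r) (Fin r) ℂ)
    (h1 : E * E⁻¹ = 1) (h2 : E⁻¹ * E = 1) (n : ℕ) :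
    (E * X * E⁻¹) ^ n = E * X ^ n * E⁻¹ := by
  induction n with
  | zero => simp [h1]
  | succ n ih =>
    rw [pow_succ, pow_succ, ih]
    simp only [Matrix.mul_assoc]
    rw [← Matrix.mul_assoc E⁻¹ E, h2, Matrix.one_mul]

private lemma tele_dvd_char (p : ℕ) (m : ℤ) (hlo : -(2 * (p : ℤ)) < m) (hhi : m < 2 * (p : ℤ))
    (hd : (p : ℤ) ∣ m) : m = 0 ∨ m = -(p : ℤ) ∨ m = (p : ℤ) := by
  obtain ⟨c, rfl⟩ := hd
  rcases Nat.eq_zero_or_pos p with h | h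
  · subst h; simp at *
  have hp' : (0 : ℤ) < p := by exact_mod_cast h
  have hc1 : c < 2 := by by_contra hcon; push_neg at hcon; nlinarith
  have hc2 : -2 < c := by by_contra hcon; push_neg at hcon; nlinarith
  have : c = -1 ∨ c = 0 ∨ c = 1 := by omega
  rcases this with rfl | rfl | rfl
  · right; left; ring
  · left; ring
  · right; right; ring

private lemma tele_zmod_zero (p : ℕ) (m : ℤ) (hlo : -(2 * (p : ℤ)) < m)
    (hhi : m < 2 * (p : ℤ)) :
    ((m : ZMod p) = 0) ↔ (m = 0 ∨ m = -(p : ℤ) ∨ m = (p : ℤ)) := by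
  rw [ZMod.intCast_zmod_eq_zero_iff_dvd]
  constructor
  · exact tele_dvd_char p m hlo hhi
  · rintro (rfl | rfl | rfl) <;> simp

private lemma tele_zmod_one (p : ℕ) (m : ℤ) :
    ((m : ZMod p) = 1) ↔ (((m - 1 : ℤ) : ZMod p) = 0) := by
  have : ((m - 1 : ℤ) : ZMod p) = (m : ZMod p) - 1 := by push_cast; ring
  rw [this, sub_eq_zero]

private lemma tele_vmv_mul {r : ℕ} (x y z w : Fin r → ℂ) :
    vecMulVec x y * vecMulVec z w = (y ⬝ᵥ z) • vecMulVec x w := by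
  ext i j
  simp only [mul_apply, vecMulVec_apply, Matrix.smul_apply, smul_eq_mul, dotProduct, Finset.sum_mul]
  exact Finset.sum_congr rfl fun l _ => by ring

/-- The key double-sum computation, stated abstractly. -/
private lemma tele_key {r p : ℕ} (hp : 1 ≤ p) (u v : ℤ → Fin r → ℂ)
    (hdot : ∀ m n : ℤ, v m ⬝ᵥ u n =
      (if ((m + n : ℤ) : ZMod p) = 0 then 1 else 0) +
      (if ((m + n : ℤ) : ZMod p) = 1 then (1 : ℂ) else 0))
    (hvper : ∀ m : ℤ, v (m - p) = v m) :
    (∑ k ∈ Finset.Icc 1 p, vecMulVec (u k) (v (-(k : ℤ)))) *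
      (∑ k ∈ Finset.Icc 1 p, vecMulVec (u k) (v (1 - (k : ℤ)))) =
      (∑ k ∈ Finset.Icc 1 p, vecMulVec (u k) (v (-(k : ℤ)))) +
      (∑ k ∈ Finset.Icc 1 p, vecMulVec (u k) (v (1 - (k : ℤ)))) ∧
    (∑ k ∈ Finset.Icc 1 p, vecMulVec (u k) (v (1 - (k : ℤ)))) *
      (∑ k ∈ Finset.Icc 1 p, vecMulVec (u k) (v (-(k : ℤ)))) =
      (∑ k ∈ Finset.Icc 1 p, vecMulVec (u k) (v (-(k : ℤ)))) +
      (∑ k ∈ Finset.Icc 1 p, vecMulVec (u k) (v (1 - (k : ℤ)))) := by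
  constructor
  · -- L-side product
    rw [Finset.sum_mul_sum]
    have hterm : ∀ k ∈ Finset.Icc 1 p,
        (∑ j ∈ Finset.Icc 1 p,
          vecMulVec (u k) (v (-(k : ℤ))) * vecMulVec (u j) (v (1 - (j : ℤ)))) =
        vecMulVec (u k) (v (-(k : ℤ))) + vecMulVec (u k) (v (1 - (k : ℤ))) := by
      intro k hk
      rw [Finset.mem_Icc] at hk
      obtain ⟨hk1, hk2⟩ := hk
      have step1 : ∀ j ∈ Finset.Icc 1 p,
          vecMulVec (u k) (v (-(k : ℤ))) * vecMulVec (u j) (v (1 - (j : ℤ))) =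
          (if ((-(k : ℤ) + (j : ℤ) : ℤ) : ZMod p) = 0 then (1:ℂ) else 0) •
            vecMulVec (u k) (v (1 - (j : ℤ))) +
          (if ((-(k : ℤ) + (j : ℤ) : ℤ) : ZMod p) = 1 then (1:ℂ) else 0) •
            vecMulVec (u k) (v (1 - (j : ℤ))) := by
        intro j hj
        rw [tele_vmv_mul, hdot, add_smul]
      rw [Finset.sum_congr rfl step1, Finset.sum_add_distrib]
      set j₀ : ℕ := if k < p then k + 1 else 1 with hj₀
      have hj₀mem : j₀ ∈ Finset.Icc 1 p := by
        rw [Finset.mem_Icc, hj₀]; split <;> omega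
      have e0 : ∀ j ∈ Finset.Icc 1 p,
          ((if ((-(k : ℤ) + (j : ℤ) : ℤ) : ZMod p) = 0 then (1:ℂ) else 0) •
            vecMulVec (u k) (v (1 - (j : ℤ)))) =
          if j = k then vecMulVec (u k) (v (1 - (j : ℤ))) else 0 := by
        intro j hj
        rw [Finset.mem_Icc] at hj
        have hiff : ((-(k : ℤ) + (j : ℤ) : ℤ) : ZMod p) = 0 ↔ j = k := by
          rw [tele_zmod_zero p _ (by omega) (by omega)]
          omega
        rw [ite_smul, one_smul, zero_smul, if_congr hiff rfl rfl]
      have e1 : ∀ j ∈ Finset.Icc 1 p,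
          ((if ((-(k : ℤ) + (j : ℤ) : ℤ) : ZMod p) = 1 then (1:ℂ) else 0) •
            vecMulVec (u k) (v (1 - (j : ℤ)))) =
          if j = j₀ then vecMulVec (u k) (v (1 - (j : ℤ))) else 0 := by
        intro j hj
        rw [Finset.mem_Icc] at hj
        have hiff : ((-(k : ℤ) + (j : ℤ) : ℤ) : ZMod p) = 1 ↔ j = j₀ := by
          rw [tele_zmod_one, tele_zmod_zero p _ (by omega) (by omega), hj₀]
          split <;> omega
        rw [ite_smul, one_smul, zero_smul, if_congr hiff rfl rfl]
      rw [Finset.sum_congr rfl e0, Finset.sum_congr rfl e1,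
        Finset.sum_ite_eq' (Finset.Icc 1 p) k, Finset.sum_ite_eq' (Finset.Icc 1 p) j₀,
        if_pos (Finset.mem_Icc.2 ⟨hk1, hk2⟩), if_pos hj₀mem]
      have hA : vecMulVec (u k) (v (1 - (j₀ : ℤ))) = vecMulVec (u k) (v (-(k : ℤ))) := by
        rw [hj₀]
        by_cases hkp : k < p
        · rw [if_pos hkp]
          congr 1
          congr 1
          push_cast
          ring
        · rw [if_neg hkp]
          have hkep : k = p := by omega
          subst hkep
          have : v (-(k : ℤ)) = v 0 := by
            have := hvper 0
            rw [zero_sub] at this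
            rw [this]
          rw [this]
          norm_num
      rw [hA, add_comm]
    rw [Finset.sum_congr rfl hterm, Finset.sum_add_distrib]
  · -- R-side product
    rw [Finset.sum_mul_sum]
    have hterm : ∀ j ∈ Finset.Icc 1 p,
        (∑ k ∈ Finset.Icc 1 p,
          vecMulVec (u j) (v (1 - (j : ℤ))) * vecMulVec (u k) (v (-(k : ℤ)))) =
        vecMulVec (u j) (v (-(j : ℤ))) + vecMulVec (u j) (v (1 - (j : ℤ))) := by
      intro j hj
      rw [Finset.mem_Icc] at hj
      obtain ⟨hj1, hj2⟩ := hj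
      have step1 : ∀ k ∈ Finset.Icc 1 p,
          vecMulVec (u j) (v (1 - (j : ℤ))) * vecMulVec (u k) (v (-(k : ℤ))) =
          (if ((1 - (j : ℤ) + (k : ℤ) : ℤ) : ZMod p) = 0 then (1:ℂ) else 0) •
            vecMulVec (u j) (v (-(k : ℤ))) +
          (if ((1 - (j : ℤ) + (k : ℤ) : ℤ) : ZMod p) = 1 then (1:ℂ) else 0) •
            vecMulVec (u j) (v (-(k : ℤ))) := by
        intro k hk
        rw [tele_vmv_mul, hdot, add_smul]
      rw [Finset.sum_congr rfl step1, Finset.sum_add_distrib]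
      set k₀ : ℕ := if 1 < j then j - 1 else p with hk₀
      have hk₀mem : k₀ ∈ Finset.Icc 1 p := by
        rw [Finset.mem_Icc, hk₀]; split <;> omega
      have e0 : ∀ k ∈ Finset.Icc 1 p,
          ((if ((1 - (j : ℤ) + (k : ℤ) : ℤ) : ZMod p) = 0 then (1:ℂ) else 0) •
            vecMulVec (u j) (v (-(k : ℤ)))) =
          if k = k₀ then vecMulVec (u j) (v (-(k : ℤ))) else 0 := by
        intro k hk
        rw [Finset.mem_Icc] at hk
        have hiff : ((1 - (j : ℤ) + (k : ℤ) : ℤ) : ZMod p) = 0 ↔ k = k₀ := by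
          rw [tele_zmod_zero p _ (by omega) (by omega), hk₀]
          split <;> omega
        rw [ite_smul, one_smul, zero_smul, if_congr hiff rfl rfl]
      have e1 : ∀ k ∈ Finset.Icc 1 p,
          ((if ((1 - (j : ℤ) + (k : ℤ) : ℤ) : ZMod p) = 1 then (1:ℂ) else 0) •
            vecMulVec (u j) (v (-(k : ℤ)))) =
          if k = j then vecMulVec (u j) (v (-(k : ℤ))) else 0 := by
        intro k hk
        rw [Finset.mem_Icc] at hk
        have hiff : ((1 - (j : ℤ) + (k : ℤ) : ℤ) : ZMod p) = 1 ↔ k = j := by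
          rw [tele_zmod_one, tele_zmod_zero p _ (by omega) (by omega)]
          omega
        rw [ite_smul, one_smul, zero_smul, if_congr hiff rfl rfl]
      rw [Finset.sum_congr rfl e0, Finset.sum_congr rfl e1,
        Finset.sum_ite_eq' (Finset.Icc 1 p) k₀, Finset.sum_ite_eq' (Finset.Icc 1 p) j,
        if_pos hk₀mem, if_pos (Finset.mem_Icc.2 ⟨hj1, hj2⟩)]
      have hB : vecMulVec (u j) (v (-(k₀ : ℤ))) = vecMulVec (u j) (v (1 - (j : ℤ))) := by
        rw [hk₀]
        by_cases hjp : 1 < j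
        · rw [if_pos hjp]
          congr 1
          congr 1
          push_cast [Nat.cast_sub (by omega : 1 ≤ j)]
          ring
        · rw [if_neg hjp]
          have hje : j = 1 := by omega
          subst hje
          have : v (-(p : ℤ)) = v 0 := by
            have := hvper 0
            rw [zero_sub] at this
            rw [this]
          rw [this]
          norm_num
      rw [hB, add_comm]
    rw [Finset.sum_congr rfl hterm, Finset.sum_add_distrib]

/-- With the spherical-orbit data `(E, H = E⁻¹Eᵀ, a, p)`, the telescopic matrices
`L = 1 - ∑_{k=1}^{p} Hᵏ a aᵀ E H⁻ᵏ` and `R = 1 - ∑_{k=1}^{p} Hᵏ a aᵀ E H^{1-k}` are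
mutually inverse: `L·R = 1` and `R·L = 1`; in particular `L` is invertible. -/
theorem telescopic_inverse (r p : ℕ) (hp : 1 ≤ p)
    (E : Matrix (Fin r) (Fin r) ℂ) (hE : IsUnit E.det)
    (H : Matrix (Fin r) (Fin r) ℂ) (hH : H = E⁻¹ * Eᵀ)
    (a : Fin r → ℂ)
    (ha : (H ^ (p : ℤ)).mulVec a = a)
    (horth : ∀ k : ℤ, a ⬝ᵥ E.mulVec ((H ^ k).mulVec a) =
      (if (k : ZMod p) = 0 then 1 else 0) + (if (k : ZMod p) = 1 then 1 else 0))
    (L R : Matrix (Fin r) (Fin r) ℂ)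
    (hL : L = 1 - ∑ k ∈ Finset.Icc 1 p,
      vecMulVec ((H ^ (k : ℤ)).mulVec a) (vecMul a (E * H ^ (-(k : ℤ)))))
    (hR : R = 1 - ∑ k ∈ Finset.Icc 1 p,
      vecMulVec ((H ^ (k : ℤ)).mulVec a) (vecMul a (E * H ^ (1 - (k : ℤ))))) :
    L * R = 1 ∧ R * L = 1 ∧ IsUnit L := by
  have hEE : E * E⁻¹ = 1 := mul_nonsing_inv E hE
  have hEE' : E⁻¹ * E = 1 := nonsing_inv_mul E hE
  have hdetH : IsUnit H.det := by
    rw [hH, det_mul, det_nonsing_inv, det_transpose, Ring.inverse_mul_cancel _ hE]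
    exact isUnit_one
  have hzadd : ∀ m n : ℤ, H ^ (m + n) = H ^ m * H ^ n := fun m n => Matrix.zpow_add hdetH m n
  set u : ℤ → Fin r → ℂ := fun k => (H ^ k).mulVec a with hu
  set v : ℤ → Fin r → ℂ := fun m => vecMul a (E * H ^ m) with hv
  -- the dot products
  have hdot : ∀ m n : ℤ, v m ⬝ᵥ u n =
      (if ((m + n : ℤ) : ZMod p) = 0 then 1 else 0) +
      (if ((m + n : ℤ) : ZMod p) = 1 then (1 : ℂ) else 0) := by
    intro m n
    simp only [hu, hv]
    rw [← dotProduct_mulVec, mulVec_mulVec, Matrix.mul_assoc, ← hzadd, ← mulVec_mulVec,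
      dotProduct_mulVec a E, ← dotProduct_mulVec]
    exact horth (m + n)
  -- periodicity of v
  have hHt : Hᵀ = E * H⁻¹ * E⁻¹ := by
    rw [hH, transpose_mul, transpose_transpose, transpose_nonsing_inv,
      Matrix.mul_inv_rev, nonsing_inv_nonsing_inv E hE]
    simp only [Matrix.mul_assoc]
    rw [hEE, Matrix.mul_one]
  have hHinvp : (H⁻¹ : Matrix (Fin r) (Fin r) ℂ) ^ p = H ^ (-(p : ℤ)) := by
    rw [Matrix.inv_pow', Matrix.zpow_neg hdetH, zpow_natCast]
  have hp2 : ((H ^ p)ᵀ : Matrix (Fin r) (Fin r) ℂ) = E * H ^ (-(p : ℤ)) * E⁻¹ := by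
    rw [transpose_pow, hHt, tele_conj_pow E H⁻¹ hEE hEE' p, hHinvp]
  have hEHp : E * H ^ (-(p : ℤ)) = (H ^ p)ᵀ * E := by
    rw [hp2, Matrix.mul_assoc, hEE', Matrix.mul_one]
  have hkey : vecMul a (E * H ^ (-(p : ℤ))) = vecMul a E := by
    rw [hEHp, ← vecMul_vecMul a ((H ^ p)ᵀ) E, vecMul_transpose]
    rw [show (H ^ p : Matrix (Fin r) (Fin r) ℂ) = H ^ (p : ℤ) from (zpow_natCast H p).symm, ha]
  have hvper : ∀ m : ℤ, v (m - p) = v m := by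
    intro m
    simp only [hv]
    have h1 : E * H ^ (m - (p : ℤ)) = E * H ^ (-(p : ℤ)) * H ^ m := by
      rw [Matrix.mul_assoc, ← hzadd]
      congr 1
      ring
    rw [h1, ← vecMul_vecMul a (E * H ^ (-(p : ℤ))) (H ^ m), hkey, vecMul_vecMul]
  obtain ⟨h1, h2⟩ := tele_key hp u v hdot hvper
  have hLf : L = 1 - ∑ k ∈ Finset.Icc 1 p, vecMulVec (u k) (v (-(k : ℤ))) := by
    rw [hL]
  have hRf : R = 1 - ∑ k ∈ Finset.Icc 1 p, vecMulVec (u k) (v (1 - (k : ℤ))) := by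
    rw [hR]
  have hLR : L * R = 1 := by
    rw [hLf, hRf, Matrix.sub_mul, Matrix.mul_sub, Matrix.mul_sub, Matrix.one_mul,
      Matrix.one_mul, Matrix.mul_one, h1]
    abel
  have hRL : R * L = 1 := by
    rw [hLf, hRf, Matrix.sub_mul, Matrix.mul_sub, Matrix.mul_sub, Matrix.one_mul,
      Matrix.one_mul, Matrix.mul_one, h2]
    abel
  exact ⟨hLR, hRL, ⟨⟨L, R, hLR, hRL⟩, rfl⟩⟩
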